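/- Let n be a positive integer and δ ≥ 1. The number of integer matrices ξ = ((a,b),(c,d)) with det ξ = n, a = 0 or d = 0, and a²+b²+c²+d² ≤ 6nδ is at most C_ε n^{1/2+ε} δ^{1/2} for every ε > 0. -/

import Mathlib

open Finset Real

theorem divisor_bound (ε : ℝ) (hε : 0 < ε) :
    ∃ C > 0, ∀ n : ℕ, 0 < n → (n.divisors.card : ℝ) ≤ C * (n : ℝ) ^ ε := by
  classical
  have hlog2 : (0:ℝ) < Real.log 2 := Real.log_pos one_lt_two
  set K : ℝ := 1 + 1 / (ε * Real.log 2) with hKdef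
  have hK1 : 1 ≤ K := le_add_of_nonneg_right (by positivity)
  have hK0 : 0 < K := lt_of_lt_of_le one_pos hK1
  set B : ℕ := ⌈(2:ℝ) ^ (1/ε : ℝ)⌉₊ with hBdef
  refine ⟨K ^ (B + 1), by positivity, ?_⟩
  intro n hn
  have hn0 : n ≠ 0 := hn.ne'
  have key : ∀ p ∈ n.primeFactors,
      ((n.factorization p + 1 : ℕ) : ℝ) ≤
        (if (p:ℝ) ^ ε < 2 then K else 1) * ((p : ℝ) ^ (n.factorization p)) ^ ε := by
    intro p hp
    have hp2 : (2:ℝ) ≤ (p:ℝ) := by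
      exact_mod_cast (Nat.prime_of_mem_primeFactors hp).two_le
    have hp0 : (0:ℝ) ≤ (p:ℝ) := by linarith
    set a := n.factorization p with ha
    have hpow : ((p : ℝ) ^ a) ^ ε = ((p:ℝ) ^ ε) ^ a := by
      rw [← Real.rpow_natCast (p:ℝ) a, ← Real.rpow_mul hp0, mul_comm,
        Real.rpow_mul hp0, Real.rpow_natCast]
    split_ifs with hcase
    · have h1 : (2:ℝ) ^ ((a:ℝ) * ε) ≤ (p:ℝ) ^ ((a:ℝ) * ε) :=
        Real.rpow_le_rpow (by norm_num) hp2 (by positivity)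
      have h2 : 1 + (a:ℝ) * ε * Real.log 2 ≤ (2:ℝ) ^ ((a:ℝ) * ε) := by
        rw [Real.rpow_def_of_pos two_pos]
        have := Real.add_one_le_exp ((a:ℝ) * ε * Real.log 2)
        calc 1 + (a:ℝ) * ε * Real.log 2 ≤ Real.exp ((a:ℝ)*ε*Real.log 2) := by linarith
          _ = _ := by ring_nf
      have h3 : ((p:ℝ) ^ a) ^ ε = (p:ℝ) ^ ((a:ℝ) * ε) := by
        rw [← Real.rpow_natCast (p:ℝ) a, ← Real.rpow_mul hp0]
      rw [h3]
      have hKexp : ((a + 1 : ℕ) : ℝ) ≤ K * (1 + (a:ℝ) * ε * Real.log 2) := by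
        push_cast
        rw [hKdef]
        have ha0 : (0:ℝ) ≤ a := Nat.cast_nonneg a
        have hεl : (0:ℝ) < ε * Real.log 2 := mul_pos hε hlog2
        have hinv : 1 / (ε * Real.log 2) * ((a:ℝ) * (ε * Real.log 2)) = a := by
          field_simp
        have hexp : (1 + 1 / (ε * Real.log 2)) * (1 + (a:ℝ) * ε * Real.log 2)
            = 1 + (a:ℝ) * (ε * Real.log 2) + 1 / (ε * Real.log 2)
              + 1 / (ε * Real.log 2) * ((a:ℝ) * (ε * Real.log 2)) := by ring
        rw [hexp, hinv]
        have h4 : 0 ≤ (a:ℝ) * (ε * Real.log 2) := by positivity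
        have h5 : 0 ≤ 1 / (ε * Real.log 2) := by positivity
        linarith
      calc ((a + 1 : ℕ) : ℝ) ≤ K * (1 + (a:ℝ) * ε * Real.log 2) := hKexp
        _ ≤ K * (p:ℝ) ^ ((a:ℝ) * ε) :=
            mul_le_mul_of_nonneg_left (le_trans h2 h1) (le_of_lt hK0)
    · push_neg at hcase
      rw [hpow, one_mul]
      have h2a : ((a + 1 : ℕ) : ℝ) ≤ (2:ℝ) ^ a := by
        have := Nat.lt_two_pow_self (n := a)
        have : (a + 1 : ℕ) ≤ 2 ^ a := this
        calc ((a + 1 : ℕ) : ℝ) ≤ ((2 ^ a : ℕ) : ℝ) := by exact_mod_cast this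
          _ = (2:ℝ) ^ a := by push_cast; ring
      exact le_trans h2a (pow_le_pow_left₀ (by norm_num) hcase a)
  -- product bound
  have hprod : (n.divisors.card : ℝ) ≤
      (∏ p ∈ n.primeFactors, (if (p:ℝ) ^ ε < 2 then K else 1)) * (n:ℝ) ^ ε := by
    have hc : (n.divisors.card : ℝ) =
        ∏ p ∈ n.primeFactors, ((n.factorization p + 1 : ℕ) : ℝ) := by
      rw [Nat.card_divisors hn0]; push_cast; rfl
    have hne : (n:ℝ) ^ ε = ∏ p ∈ n.primeFactors, ((p:ℝ) ^ (n.factorization p)) ^ ε := by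
      rw [Real.finset_prod_rpow _ _ (fun p _ => by positivity)]
      congr 1
      have hfac : ∏ p ∈ n.primeFactors, p ^ n.factorization p = n := by
        rw [← Nat.support_factorization]
        exact Nat.factorization_prod_pow_eq_self hn0
      calc (n:ℝ) = ((∏ p ∈ n.primeFactors, p ^ n.factorization p : ℕ) : ℝ) := by
            rw [hfac]
        _ = ∏ p ∈ n.primeFactors, ((p:ℝ) ^ (n.factorization p)) := by push_cast [Nat.cast_prod]; rfl
    rw [hc, hne, ← Finset.prod_mul_distrib]
    exact Finset.prod_le_prod (fun p _ => by positivity) key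
  have hsmall : (∏ p ∈ n.primeFactors, (if (p:ℝ) ^ ε < 2 then K else 1)) ≤ K ^ (B + 1) := by
    rw [← Finset.prod_filter]
    rw [Finset.prod_const]
    apply pow_le_pow_right₀ hK1
    have hsub : (n.primeFactors.filter fun p : ℕ => (p:ℝ) ^ ε < 2) ⊆ Finset.range (B + 1) := by
      intro p hp
      simp only [Finset.mem_filter] at hp
      rw [Finset.mem_range]
      have hp2 : (2:ℝ) ≤ (p:ℝ) := by
        exact_mod_cast (Nat.prime_of_mem_primeFactors hp.1).two_le
      have : (p:ℝ) < (2:ℝ) ^ (1/ε : ℝ) := by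
        have h1 : ((p:ℝ) ^ ε) ^ (1/ε : ℝ) < (2:ℝ) ^ (1/ε : ℝ) :=
          Real.rpow_lt_rpow (by positivity) hp.2 (by positivity)
        rwa [← Real.rpow_mul (by linarith), mul_one_div, div_self hε.ne', Real.rpow_one] at h1
      have : (p:ℝ) < (B:ℝ) + 1 := lt_of_lt_of_le this (le_trans (Nat.le_ceil _) (by push_cast; linarith))
      exact_mod_cast this
    calc (n.primeFactors.filter fun p : ℕ => (p:ℝ) ^ ε < 2).card
        ≤ (Finset.range (B+1)).card := Finset.card_le_card hsub
      _ = B + 1 := Finset.card_range _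
  calc (n.divisors.card : ℝ) ≤ _ := hprod
    _ ≤ K ^ (B+1) * (n:ℝ) ^ ε :=
        mul_le_mul_of_nonneg_right hsmall (Real.rpow_nonneg (Nat.cast_nonneg n) ε)

theorem stmt12 (ε : ℝ) (hε : 0 < ε) :
    ∃ C > 0, ∀ n : ℕ, 0 < n → ∀ δ : ℝ, 1 ≤ δ →
      (Set.ncard {ξ : Matrix (Fin 2) (Fin 2) ℤ | ξ.det = (n : ℤ) ∧
          (ξ 0 0 = 0 ∨ ξ 1 1 = 0) ∧
          (ξ 0 0 : ℝ) ^ 2 + (ξ 0 1 : ℝ) ^ 2 + (ξ 1 0 : ℝ) ^ 2 + (ξ 1 1 : ℝ) ^ 2 ≤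
            6 * (n : ℝ) * δ} : ℝ)
        ≤ C * (n : ℝ) ^ ((1 : ℝ) / 2 + ε) * δ ^ ((1 : ℝ) / 2) := by
  classical
  obtain ⟨C₀, hC₀, hdiv⟩ := divisor_bound ε hε
  refine ⟨60 * C₀, by positivity, ?_⟩
  intro n hn δ hδ
  have hn1 : (1:ℝ) ≤ (n:ℝ) := by exact_mod_cast hn
  set M : ℤ := ⌈Real.sqrt (6 * (n:ℝ) * δ)⌉ with hM
  have hsq1 : (1:ℝ) ≤ Real.sqrt (6 * (n:ℝ) * δ) := by
    rw [show (1:ℝ) = Real.sqrt 1 by simp]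
    apply Real.sqrt_le_sqrt; nlinarith
  have hM1 : (1:ℤ) ≤ M := by
    have : (1:ℝ) ≤ (M:ℝ) := le_trans hsq1 (Int.le_ceil _)
    exact_mod_cast this
  set S : Set (Matrix (Fin 2) (Fin 2) ℤ) := {ξ : Matrix (Fin 2) (Fin 2) ℤ | ξ.det = (n : ℤ) ∧
          (ξ 0 0 = 0 ∨ ξ 1 1 = 0) ∧
          (ξ 0 0 : ℝ) ^ 2 + (ξ 0 1 : ℝ) ^ 2 + (ξ 1 0 : ℝ) ^ 2 + (ξ 1 1 : ℝ) ^ 2 ≤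
            6 * (n : ℝ) * δ} with hS
  set T : Finset (Bool × (ℕ × Bool) × ℤ) :=
    Finset.univ ×ˢ (n.divisors ×ˢ Finset.univ) ×ˢ Finset.Icc (-M) M with hT
  -- basic structural fact
  have hbc : ∀ ξ ∈ S, ξ 0 1 * ξ 1 0 = -(n:ℤ) := by
    intro ξ hξ
    obtain ⟨hdet, hdiag, -⟩ := hξ
    rw [Matrix.det_fin_two] at hdet
    rcases hdiag with h | h <;> rw [h] at hdet <;> simp at hdet <;> linarith
  have hb_ne : ∀ ξ ∈ S, ξ 0 1 ≠ 0 := by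
    intro ξ hξ hb0
    have := hbc ξ hξ
    rw [hb0, zero_mul] at this
    have : (n:ℤ) = 0 := by linarith
    exact_mod_cast hn.ne' (by exact_mod_cast this)
  have hcount : S.ncard ≤ T.card := by
    rw [← Set.ncard_coe_finset T]
    apply Set.ncard_le_ncard_of_injOn
      (fun ξ => ((decide (ξ 0 0 = 0) : Bool), ((ξ 0 1).natAbs, (decide (0 ≤ ξ 0 1) : Bool)),
        ξ 0 0 + ξ 1 1))
    · -- maps into T
      intro ξ hξ
      simp only [hT, Finset.coe_product, Set.mem_prod, Finset.mem_coe, Finset.mem_univ,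
        true_and, Finset.mem_product, Nat.mem_divisors, Finset.mem_Icc]
      constructor
      · constructor
        · refine ⟨?_, hn.ne'⟩
          have h1 : ξ 0 1 ∣ -(n:ℤ) := ⟨ξ 1 0, (hbc ξ hξ).symm⟩
          have h2 : ξ 0 1 ∣ (n:ℤ) := (dvd_neg).mp h1
          have := Int.natAbs_dvd_natAbs.mpr h2
          simpa using this
        · trivial
      · -- trace bound
        obtain ⟨-, hdiag, hnorm⟩ := hξ
        set t : ℤ := ξ 0 0 + ξ 1 1 with ht
        have htsq : ((t:ℝ)) ^ 2 ≤ 6 * (n:ℝ) * δ := by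
          rcases hdiag with h | h <;>
            (rw [ht]; push_cast [h];
             nlinarith [sq_nonneg ((ξ 0 0 : ℝ)), sq_nonneg ((ξ 0 1 : ℝ)),
               sq_nonneg ((ξ 1 0 : ℝ)), sq_nonneg ((ξ 1 1 : ℝ))])
        have habs : |(t:ℝ)| ≤ Real.sqrt (6 * (n:ℝ) * δ) := by
          rw [← Real.sqrt_sq_eq_abs]
          exact Real.sqrt_le_sqrt htsq
        have : |(t:ℝ)| ≤ (M:ℝ) := le_trans habs (Int.le_ceil _)
        have habz : |t| ≤ M := by exact_mod_cast (by push_cast; exact this : ((|t| : ℤ) : ℝ) ≤ (M:ℝ))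
        exact abs_le.mp habz
    · -- injective on S
      intro ξ hξ η hη heq
      simp only [Prod.mk.injEq] at heq
      obtain ⟨hflag, ⟨habs, hsgn⟩, htr⟩ := heq
      have hflag' : ξ 0 0 = 0 ↔ η 0 0 = 0 := by
        constructor <;> intro h <;> [skip; skip] <;>
          first
            | (apply of_decide_eq_true; rw [← hflag]; exact decide_eq_true h)
            | (apply of_decide_eq_true; rw [hflag]; exact decide_eq_true h)
      have hsgn' : 0 ≤ ξ 0 1 ↔ 0 ≤ η 0 1 := by
        constructor <;> intro h
        · exact of_decide_eq_true (by rw [← hsgn]; exact decide_eq_true h)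
        · exact of_decide_eq_true (by rw [hsgn]; exact decide_eq_true h)
      have hb : ξ 0 1 = η 0 1 := by
        rcases Int.natAbs_eq_natAbs_iff.mp habs with h | h
        · exact h
        · exfalso
          have hbne := hb_ne ξ hξ
          rcases le_or_gt 0 (ξ 0 1) with hle | hlt
          · have h2 : 0 ≤ η 0 1 := hsgn'.mp hle
            omega
          · have h2 : ¬ (0 ≤ η 0 1) := fun hc => absurd (hsgn'.mpr hc) (not_le.mpr hlt)
            omega
      have hc : ξ 1 0 = η 1 0 := by
        have h1 := hbc ξ hξ
        have h2 := hbc η hη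
        rw [← hb] at h2
        exact mul_left_cancel₀ (hb_ne ξ hξ) (h1.trans h2.symm)
      have had : ξ 0 0 = η 0 0 ∧ ξ 1 1 = η 1 1 := by
        by_cases h0 : ξ 0 0 = 0
        · have h0' : η 0 0 = 0 := hflag'.mp h0
          rw [h0, h0'] at htr ⊢
          simpa using htr
        · have h0' : η 0 0 ≠ 0 := fun hc => h0 (hflag'.mpr hc)
          have h1 : ξ 1 1 = 0 := (hξ.2.1).resolve_left h0
          have h1' : η 1 1 = 0 := (hη.2.1).resolve_left h0'
          rw [h1, h1'] at htr ⊢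
          simpa using htr
      ext i j
      fin_cases i <;> fin_cases j <;> simp only []
      · exact had.1
      · exact hb
      · exact hc
      · exact had.2
  -- cardinality of T
  have hTcard : (T.card : ℝ) = 2 * ((n.divisors.card : ℝ) * 2) * ((2 * M + 1 : ℤ) : ℝ) := by
    rw [hT, Finset.card_product, Finset.card_product, Finset.card_product]
    simp only [Finset.card_univ, Fintype.card_bool, Int.card_Icc]
    rw [show M + 1 - -M = 2 * M + 1 by ring]
    have hnn : (0:ℤ) ≤ 2 * M + 1 := by linarith
    obtain ⟨m, hm⟩ : ∃ m : ℕ, (m : ℤ) = 2 * M + 1 := ⟨(2*M+1).toNat, Int.toNat_of_nonneg hnn⟩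
    rw [← hm, Int.toNat_natCast]
    push_cast
    ring
  -- final estimate
  have hsqrt_expand : Real.sqrt (6 * (n:ℝ) * δ) ≤ 3 * (n:ℝ) ^ ((1:ℝ)/2) * δ ^ ((1:ℝ)/2) := by
    have h6 : Real.sqrt 6 ≤ 3 := by
      rw [show (3:ℝ) = Real.sqrt 9 by rw [show (9:ℝ) = 3^2 by norm_num, Real.sqrt_sq]; norm_num]
      exact Real.sqrt_le_sqrt (by norm_num)
    calc Real.sqrt (6 * (n:ℝ) * δ) = Real.sqrt 6 * Real.sqrt (n:ℝ) * Real.sqrt δ := by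
          rw [Real.sqrt_mul (by positivity), Real.sqrt_mul (by norm_num)]
      _ ≤ 3 * Real.sqrt (n:ℝ) * Real.sqrt δ := by
          have h1 : (0:ℝ) ≤ Real.sqrt n := Real.sqrt_nonneg _
          have h2 : (0:ℝ) ≤ Real.sqrt δ := Real.sqrt_nonneg _
          exact mul_le_mul_of_nonneg_right (mul_le_mul_of_nonneg_right h6 h1) h2
      _ = 3 * (n:ℝ) ^ ((1:ℝ)/2) * δ ^ ((1:ℝ)/2) := by
          rw [Real.sqrt_eq_rpow, Real.sqrt_eq_rpow]
  have hMre : ((2 * M + 1 : ℤ) : ℝ) ≤ 5 * Real.sqrt (6 * (n:ℝ) * δ) := by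
    have hMle : (M:ℝ) ≤ Real.sqrt (6 * (n:ℝ) * δ) + 1 := (Int.ceil_lt_add_one _).le
    have hMr : ((2 * M + 1 : ℤ) : ℝ) = 2 * (M:ℝ) + 1 := by push_cast; ring
    rw [hMr]
    linarith
  have h1 : (S.ncard : ℝ) ≤ (T.card : ℝ) := by exact_mod_cast hcount
  have h2 : (T.card : ℝ) ≤ 4 * (C₀ * (n:ℝ) ^ ε) * (5 * (3 * (n:ℝ) ^ ((1:ℝ)/2) * δ ^ ((1:ℝ)/2))) := by
    rw [hTcard]
    have hd := hdiv n hn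
    have hM0 : (0:ℝ) ≤ ((2 * M + 1 : ℤ) : ℝ) := by
      exact_mod_cast (by linarith : (0:ℤ) ≤ 2 * M + 1)
    have hMle : ((2 * M + 1 : ℤ) : ℝ) ≤ 5 * (3 * (n:ℝ) ^ ((1:ℝ)/2) * δ ^ ((1:ℝ)/2)) := by
      calc ((2 * M + 1 : ℤ) : ℝ) ≤ 5 * Real.sqrt (6 * (n:ℝ) * δ) := hMre
        _ ≤ 5 * (3 * (n:ℝ) ^ ((1:ℝ)/2) * δ ^ ((1:ℝ)/2)) := by linarith [hsqrt_expand]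
    have hdn : (0:ℝ) ≤ (n.divisors.card : ℝ) := Nat.cast_nonneg _
    have hCn : (0:ℝ) ≤ C₀ * (n:ℝ) ^ ε := by positivity
    calc 2 * ((n.divisors.card : ℝ) * 2) * ((2 * M + 1 : ℤ) : ℝ)
        = 4 * (n.divisors.card : ℝ) * ((2 * M + 1 : ℤ) : ℝ) := by ring
      _ ≤ 4 * (C₀ * (n:ℝ) ^ ε) * ((2 * M + 1 : ℤ) : ℝ) := by nlinarith
      _ ≤ _ := by nlinarith
  have h3 : 4 * (C₀ * (n:ℝ) ^ ε) * (5 * (3 * (n:ℝ) ^ ((1:ℝ)/2) * δ ^ ((1:ℝ)/2)))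
      = 60 * C₀ * ((n:ℝ) ^ ((1:ℝ)/2 + ε)) * δ ^ ((1:ℝ)/2) := by
    rw [Real.rpow_add (by positivity : (0:ℝ) < (n:ℝ))]
    ring
  calc (S.ncard : ℝ) ≤ _ := h1
    _ ≤ _ := h2
    _ = _ := h3
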